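/- The predictor polynomial of a Hermitian positive definite Toeplitz matrix is stable: if M^N is an N×N Hermitian positive definite Toeplitz matrix and p ∈ ℂ^N solves M^N p = e_0, then the polynomial P(z) = Σ_{k=0}^{N−1} p_k z^k has no zeros in the closed unit disk |z| ≤ 1. -/

import Mathlib

open scoped ComplexOrder

lemma aux13 {E : Type*} [NormedAddCommGroup E] [InnerProductSpace ℂ E]
    (u v : E) (z : ℂ) (hz : ‖z‖ ≤ 1) (hu : u ≠ 0) (hv : v ≠ 0)
    (huv : (inner ℂ u u : ℂ) = inner ℂ v v)
    (hk : (inner ℂ v v : ℂ) = z * inner ℂ u v) :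
    ∃ r : ℂ, r ≠ 0 ∧ v = r • u := by
  have hnorm : ‖u‖ = ‖v‖ := by
    have h := huv
    rw [inner_self_eq_norm_sq_to_K, inner_self_eq_norm_sq_to_K] at h
    have h2 := congrArg norm h
    rw [norm_pow, norm_pow, RCLike.norm_ofReal, RCLike.norm_ofReal,
      abs_of_nonneg (norm_nonneg u), abs_of_nonneg (norm_nonneg v)] at h2
    have h3 := congrArg Real.sqrt h2
    rwa [Real.sqrt_sq (norm_nonneg _), Real.sqrt_sq (norm_nonneg _)] at h3
  have hBle : ‖(inner ℂ u v : ℂ)‖ ≤ ‖u‖ * ‖v‖ := norm_inner_le_norm u v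
  have hA2 := hk
  rw [inner_self_eq_norm_sq_to_K] at hA2
  have h1 : ‖v‖^2 = ‖z‖ * ‖(inner ℂ u v : ℂ)‖ := by
    have h := congrArg norm hA2
    rwa [norm_pow, RCLike.norm_ofReal, abs_of_nonneg (norm_nonneg v),
      norm_mul] at h
  have heq : ‖(inner ℂ u v : ℂ)‖ = ‖u‖ * ‖v‖ := by
    apply le_antisymm hBle
    nlinarith [norm_nonneg (inner ℂ u v : ℂ), norm_nonneg v, h1, hz, hnorm]
  exact (norm_inner_eq_norm_iff hu hv).mp heq

lemma aux13' {m : Type*} [Fintype m] [DecidableEq m] {A : Matrix m m ℂ} (hA : A.PosDef)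
    (u v : m → ℂ) (z : ℂ) (hz : ‖z‖ ≤ 1) (hu : u ≠ 0) (hv : v ≠ 0)
    (huv : dotProduct (star u) (A.mulVec u) = dotProduct (star v) (A.mulVec v))
    (hk : dotProduct (star v) (A.mulVec v)
        = z * dotProduct (star u) (A.mulVec v)) :
    ∃ r : ℂ, r ≠ 0 ∧ v = r • u := by
  exact @aux13 (m → ℂ) (A.toNormedAddCommGroup hA)
    (A.toInnerProductSpace hA.posSemidef) u v z hz hu hv
    (by change dotProduct (A.mulVec u) (star u) = dotProduct (A.mulVec v) (star v)
        rw [dotProduct_comm, huv, dotProduct_comm])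
    (by change dotProduct (A.mulVec v) (star v) = z * dotProduct (A.mulVec v) (star u)
        rw [dotProduct_comm, hk, dotProduct_comm])


theorem stmt13 (N : ℕ) (hN : 0 < N) (M : ℤ → ℂ)
    (hherm : ∀ l : ℤ, M (-l) = star (M l))
    (hpos : (Matrix.of fun k l : Fin N => M ((k : ℤ) - (l : ℤ))).PosDef)
    (p : Fin N → ℂ)
    (hp : (Matrix.of fun k l : Fin N => M ((k : ℤ) - (l : ℤ))).mulVec p =
      (Pi.single ⟨0, hN⟩ 1 : Fin N → ℂ)) :
    ∀ z : ℂ, ‖z‖ ≤ 1 → (∑ k : Fin N, p k * z ^ (k : ℕ)) ≠ 0 := by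
  intro z hz hroot
  obtain ⟨n, rfl⟩ : ∃ n, N = n + 1 := ⟨N - 1, (Nat.succ_pred_eq_of_pos hN).symm⟩
  set T : Matrix (Fin (n+1)) (Fin (n+1)) ℂ :=
    Matrix.of fun k l : Fin (n+1) => M ((k : ℤ) - (l : ℤ)) with hTdef
  -- the "quotient" polynomial coefficients
  set q : Fin (n+1) → ℂ := fun j =>
    ∑ k : Fin (n+1), if (j:ℕ) < (k:ℕ) then p k * z ^ ((k:ℕ) - 1 - (j:ℕ)) else 0 with hqdef
  set Sq : Fin (n+1) → ℂ := fun k => Fin.cases 0 (fun i => q i.castSucc) k with hSqdef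
  have hSq0v : Sq 0 = 0 := rfl
  have hSqs : ∀ i : Fin n, Sq i.succ = q i.castSucc := fun i => by
    simp [hSqdef]
  have hqlast : q (Fin.last n) = 0 := by
    simp only [hqdef]
    apply Finset.sum_eq_zero
    intro k _
    have hk := k.isLt
    rw [if_neg]
    simpa [Fin.last] using by omega
  -- recurrence  p_{i+1} = q_i - z q_{i+1}
  have hrec : ∀ i : Fin n, q i.castSucc - z * q i.succ = p i.succ := by
    intro i
    have hstep : q i.castSucc - z * q i.succ
        = ∑ k : Fin (n+1), ((if (i:ℕ) < (k:ℕ) then p k * z ^ ((k:ℕ)-1-(i:ℕ)) else 0)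
            - z * (if (i:ℕ)+1 < (k:ℕ) then p k * z ^ ((k:ℕ)-1-((i:ℕ)+1)) else 0)) := by
      rw [Finset.sum_sub_distrib, ← Finset.mul_sum]
      simp only [hqdef, Fin.coe_castSucc, Fin.val_succ]
    rw [hstep, Fintype.sum_eq_single i.succ]
    · have h1 : (i:ℕ) < (i.succ : Fin (n+1)).val := by simp [Fin.val_succ]
      have h2 : ¬ ((i:ℕ)+1 < (i.succ : Fin (n+1)).val) := by simp [Fin.val_succ]
      simp [h1, h2, Fin.val_succ]
    · intro k hk
      have hkv : (k:ℕ) ≠ (i:ℕ)+1 := by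
        intro h; apply hk; apply Fin.ext; simp [Fin.val_succ, h]
      rcases lt_or_ge (k:ℕ) ((i:ℕ)+1) with h | h
      · have h2 : ¬ (i:ℕ) < (k:ℕ) := by omega
        have h3 : ¬ (i:ℕ)+1 < (k:ℕ) := by omega
        simp [h2, h3]
      · have h1 : (i:ℕ) < (k:ℕ) := by omega
        have h3 : (i:ℕ)+1 < (k:ℕ) := by omega
        have hpow : (k:ℕ)-1-(i:ℕ) = ((k:ℕ)-1-((i:ℕ)+1)) + 1 := by omega
        simp only [h1, h3, if_pos]
        rw [hpow, pow_succ]; ring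
  -- base: p_0 = - z q_0
  have hbase : z * q 0 = - p 0 := by
    have h1 : z * q 0 = ∑ k : Fin (n+1), (if 0 < (k:ℕ) then p k * z ^ (k:ℕ) else 0) := by
      rw [hqdef]
      rw [Finset.mul_sum]
      apply Finset.sum_congr rfl
      intro k _
      rcases Nat.eq_zero_or_pos (k:ℕ) with h | h
      · simp [h]
      · have h0 : ((0 : Fin (n+1)) : ℕ) = 0 := rfl
        rw [h0, if_pos h, if_pos h]
        have hpow : (k:ℕ) = ((k:ℕ)-1-0) + 1 := by omega
        conv_rhs => rw [hpow, pow_succ]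
        ring
    have h2 : ∑ k : Fin (n+1), p k * z ^ (k:ℕ)
        = p 0 + ∑ k : Fin (n+1), (if 0 < (k:ℕ) then p k * z ^ (k:ℕ) else 0) := by
      rw [Fin.sum_univ_succ, Fin.sum_univ_succ]
      simp [Fin.val_succ]
    rw [h1]
    have h3 := hroot
    rw [h2] at h3
    linear_combination h3
  -- p = Sq - z • q
  have hpeq : p = Sq - z • q := by
    funext k
    induction k using Fin.cases with
    | zero =>
      simp only [Pi.sub_apply, Pi.smul_apply, smul_eq_mul, hSq0v]
      linear_combination hbase
    | succ i =>
      simp only [Pi.sub_apply, Pi.smul_apply, smul_eq_mul, hSqs i]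
      linear_combination -(hrec i)
  -- q ≠ 0
  have hq0 : q ≠ 0 := by
    intro h
    have hSqz : Sq = 0 := by
      funext k
      induction k using Fin.cases with
      | zero => exact hSq0v
      | succ i => rw [hSqs i, h]; rfl
    have hp0 : p = 0 := by rw [hpeq, h, hSqz]; simp
    have h01 := congrFun hp ⟨0, hN⟩
    rw [hp0] at h01
    simp [Matrix.mulVec_zero] at h01
  have hSq0 : Sq ≠ 0 := by
    intro h
    apply hq0
    funext k
    induction k using Fin.lastCases with
    | last => exact hqlast
    | cast i => rw [← hSqs i, h]; rfl
  -- shift invariance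
  have expand : ∀ x y : Fin (n+1) → ℂ, dotProduct (star x) (T.mulVec y)
      = ∑ k : Fin (n+1), ∑ l : Fin (n+1),
          (starRingEnd ℂ) (x k) * (M ((k:ℤ) - (l:ℤ)) * y l) := by
    intro x y
    simp [dotProduct, Matrix.mulVec, hTdef, Finset.mul_sum, Pi.star_apply,
      RCLike.star_def, mul_assoc]
  have hshift : dotProduct (star Sq) (T.mulVec Sq)
      = dotProduct (star q) (T.mulVec q) := by
    rw [expand, expand]
    have lhs_eq : (∑ k : Fin (n+1), ∑ l : Fin (n+1),
          (starRingEnd ℂ) (Sq k) * (M ((k:ℤ) - (l:ℤ)) * Sq l))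
        = ∑ i : Fin n, ∑ j : Fin n,
          (starRingEnd ℂ) (q i.castSucc) * (M ((i:ℤ) - (j:ℤ)) * q j.castSucc) := by
      rw [Fin.sum_univ_succ]
      have hz1 : ∑ l : Fin (n+1),
          (starRingEnd ℂ) (Sq 0) * (M (((0:Fin (n+1)):ℤ) - (l:ℤ)) * Sq l) = 0 := by
        apply Finset.sum_eq_zero; intro l _; rw [hSq0v]; simp
      rw [hz1, zero_add]
      apply Finset.sum_congr rfl
      intro i _
      rw [Fin.sum_univ_succ]
      have hz2 : (starRingEnd ℂ) (Sq i.succ)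
          * (M (((i.succ : Fin (n+1)):ℤ) - ((0:Fin (n+1)):ℤ)) * Sq 0) = 0 := by
        rw [hSq0v]; simp
      rw [hz2, zero_add]
      apply Finset.sum_congr rfl
      intro j _
      rw [hSqs i, hSqs j]
      congr 3
      push_cast [Fin.val_succ]
      ring
    have rhs_eq : (∑ k : Fin (n+1), ∑ l : Fin (n+1),
          (starRingEnd ℂ) (q k) * (M ((k:ℤ) - (l:ℤ)) * q l))
        = ∑ i : Fin n, ∑ j : Fin n,
          (starRingEnd ℂ) (q i.castSucc) * (M ((i:ℤ) - (j:ℤ)) * q j.castSucc) := by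
      rw [Fin.sum_univ_castSucc]
      have hz3 : ∑ l : Fin (n+1),
          (starRingEnd ℂ) (q (Fin.last n)) * (M (((Fin.last n : Fin (n+1)):ℤ) - (l:ℤ)) * q l) = 0 := by
        apply Finset.sum_eq_zero; intro l _; rw [hqlast]; simp
      rw [hz3, add_zero]
      apply Finset.sum_congr rfl
      intro i _
      rw [Fin.sum_univ_castSucc]
      have hz4 : (starRingEnd ℂ) (q i.castSucc)
          * (M (((i.castSucc : Fin (n+1)):ℤ) - ((Fin.last n : Fin (n+1)):ℤ)) * q (Fin.last n)) = 0 := by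
        rw [hqlast]; simp
      rw [hz4, add_zero]
      apply Finset.sum_congr rfl
      intro j _
      congr 3
    rw [lhs_eq, rhs_eq]
  -- key identity from hp
  have key : dotProduct (star q) (T.mulVec q)
      = z * dotProduct (star Sq) (T.mulVec q) := by
    have h0 : dotProduct (star Sq) (T.mulVec p) = 0 := by
      rw [hp, dotProduct_single]
      have h00 : (⟨0, hN⟩ : Fin (n+1)) = 0 := rfl
      rw [h00]
      simp [Pi.star_apply, hSq0v]
    rw [hpeq, Matrix.mulVec_sub, Matrix.mulVec_smul, dotProduct_sub,
      dotProduct_smul, smul_eq_mul] at h0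
    rw [← hshift]
    linear_combination h0
  obtain ⟨r, hr, hqr⟩ := aux13' hpos Sq q z hz hSq0 hq0 hshift key
  -- conclude q = 0 : contradiction
  apply hq0
  funext k
  induction k using Fin.induction with
  | zero =>
    have h := congrFun hqr 0
    rw [Pi.smul_apply, hSq0v, smul_zero] at h
    simpa using h
  | succ i ih =>
    have h := congrFun hqr i.succ
    rw [Pi.smul_apply, hSqs i, smul_eq_mul] at h
    rw [Pi.zero_apply] at *
    rw [h, ih, mul_zero]
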